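/- Let M be an m × n integer matrix all of whose entries are -1, 0, or 1, viewed as a linear map φ : ℤ^n → ℤ^m. Then the cardinality of the torsion subgroup of coker(φ) is at most min(m!, n!). -/

import Mathlib

open Matrix Submodule

private lemma detNatAbs_le_factorial {r : ℕ} (A : Matrix (Fin r) (Fin r) ℤ)
    (h : ∀ i j, |A i j| ≤ 1) : A.det.natAbs ≤ r.factorial := by
  have h1 : |A.det| ≤ (r.factorial : ℤ) := by
    rw [Matrix.det_apply]
    calc |∑ σ : Equiv.Perm (Fin r), Equiv.Perm.sign σ • ∏ i, A (σ i) i|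
        ≤ ∑ σ : Equiv.Perm (Fin r), |Equiv.Perm.sign σ • ∏ i, A (σ i) i| :=
          Finset.abs_sum_le_sum_abs _ _
      _ ≤ ∑ _σ : Equiv.Perm (Fin r), 1 := by
          refine Finset.sum_le_sum fun σ _ => ?_
          rw [Units.smul_def, zsmul_eq_mul, Int.cast_id, abs_mul]
          have hsgn : ∀ u : ℤˣ, |((u : ℤˣ) : ℤ)| = 1 := by
            intro u
            rcases Int.units_eq_one_or u with hs | hs <;> rw [hs] <;> norm_num
          rw [hsgn, one_mul, Finset.abs_prod]
          exact Finset.prod_le_one (fun i _ => abs_nonneg _) (fun i _ => h _ _)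
      _ = (r.factorial : ℤ) := by
          rw [Finset.sum_const, Finset.card_univ, Fintype.card_perm, Fintype.card_fin]
          simp
  rw [Int.abs_eq_natAbs] at h1
  exact_mod_cast h1

private noncomputable def castL (m : ℕ) : (Fin m → ℤ) →ₗ[ℤ] (Fin m → ℚ) where
  toFun x i := (x i : ℚ)
  map_add' x y := by ext i; push_cast; simp
  map_smul' k x := by
    ext i
    simp only [Pi.smul_apply, smul_eq_mul, RingHom.id_apply, zsmul_eq_mul]
    push_cast; ring

private lemma castL_injective (m : ℕ) : Function.Injective (castL m) := by
  intro x y h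
  ext i
  have : ((x i : ℚ)) = (y i : ℚ) := congrFun h i
  exact_mod_cast this

private lemma castL_mem_span {m : ℕ} {S : Set (Fin m → ℤ)} {x : Fin m → ℤ}
    (hx : x ∈ span ℤ S) : castL m x ∈ span ℚ (castL m '' S) := by
  induction hx using Submodule.span_induction with
  | mem y hy => exact subset_span ⟨y, hy, rfl⟩
  | zero => rw [map_zero]; exact zero_mem _
  | add u v _ _ h1 h2 => rw [map_add]; exact add_mem h1 h2
  | smul k y _ h => 
    rw [LinearMap.map_smul, ← Int.cast_smul_eq_zsmul ℚ]
    exact Submodule.smul_mem _ _ h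

/-- Let `M` be an `m × n` integer matrix all of whose entries are `-1`, `0`, or `1`,
viewed as a linear map `φ : ℤ^n → ℤ^m`. Then the cardinality of the torsion subgroup of
`coker φ` is at most `min m! n!`. -/
theorem torsion_coker_card_le (m n : ℕ) (M : Matrix (Fin m) (Fin n) ℤ)
    (hM : ∀ i j, M i j ∈ ({-1, 0, 1} : Set ℤ)) :
    Nat.card (Submodule.torsion ℤ ((Fin m → ℤ) ⧸ LinearMap.range M.mulVecLin)) ≤
      min (Nat.factorial m) (Nat.factorial n) := by
  classical
  set N : Submodule ℤ (Fin m → ℤ) := LinearMap.range M.mulVecLin with hNdef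
  obtain ⟨r, ⟨bM, bN, f, a, hsnf⟩⟩ := N.smithNormalForm (Pi.basisFun ℤ (Fin m))
  have ha : ∀ i, a i ≠ 0 := by
    intro i hi
    apply bN.ne_zero i
    have := hsnf i
    rw [hi, zero_smul] at this
    exact Subtype.ext this
  -- the "partial basis" c and saturation Sat
  set c : Fin r → (Fin m → ℤ) := fun i => bM (f i) with hc
  set Sat : Submodule ℤ (Fin m → ℤ) := span ℤ (Set.range c) with hSat
  have hrange_c : Set.range c = bM '' (Set.range f) := by
    ext x; simp [hc]
  have hcmem : ∀ i, c i ∈ Sat := fun i => subset_span ⟨i, rfl⟩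
  have hbNval : ∀ i, (bN i : Fin m → ℤ) = a i • c i := fun i => hsnf i
  have hNle : N ≤ Sat := by
    have hspan : span ℤ (Set.range (fun i => ((bN i : Fin m → ℤ)))) = N := by
      conv_rhs => rw [← Submodule.map_subtype_top N]
      rw [← bN.span_eq, Submodule.map_span]
      congr 1
      ext x
      simp [Set.range_comp]
    rw [← hspan, Submodule.span_le]
    rintro x ⟨i, rfl⟩
    show (bN i : Fin m → ℤ) ∈ Sat
    rw [hbNval i]
    exact Submodule.smul_mem _ _ (hcmem i)
  have hNspan : span ℤ (Set.range (fun i => ((bN i : Fin m → ℤ)))) = N := by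
    conv_rhs => rw [← Submodule.map_subtype_top N]
    rw [← bN.span_eq, Submodule.map_span]
    congr 1
    ext x
    simp [Set.range_comp]
  -- torsion is the image of Sat
  have htor : Submodule.torsion ℤ ((Fin m → ℤ) ⧸ N) = Sat.map N.mkQ := by
    ext x
    rw [Submodule.mem_torsion_iff]
    constructor
    · rintro ⟨k, hk⟩
      obtain ⟨y, rfl⟩ := N.mkQ_surjective x
      refine ⟨y, ?_, rfl⟩
      rw [Submonoid.smul_def, ← LinearMap.map_smul, Submodule.mkQ_apply,
        Submodule.Quotient.mk_eq_zero] at hk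
      have hky : (k : ℤ) • y ∈ Sat := hNle hk
      show y ∈ Sat
      rw [hSat, hrange_c, Module.Basis.mem_span_image] at hky ⊢
      rwa [_root_.map_smul, Finsupp.support_smul_eq (nonZeroDivisors.coe_ne_zero k)] at hky
    · rintro ⟨y, hy, rfl⟩
      refine ⟨⟨∏ i, a i, mem_nonZeroDivisors_of_ne_zero
        (Finset.prod_ne_zero_iff.mpr fun i _ => ha i)⟩, ?_⟩
      have hprod : ∀ z, z ∈ Sat → (∏ i, a i) • z ∈ N := by
        intro z hz
        rw [hSat] at hz
        induction hz using Submodule.span_induction with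
        | mem w hw =>
          obtain ⟨i, rfl⟩ := hw
          have hpe : (∏ j, a j) = (∏ j ∈ Finset.univ.erase i, a j) * a i :=
            (Finset.prod_erase_mul _ _ (Finset.mem_univ i)).symm
          rw [hpe, mul_smul, ← hbNval i]
          exact Submodule.smul_mem _ _ (bN i).2
        | zero => simp
        | add u v _ _ h1 h2 => rw [smul_add]; exact add_mem h1 h2
        | smul k w _ h => rw [smul_comm]; exact Submodule.smul_mem _ _ h
      rw [Submonoid.smul_def, ← LinearMap.map_smul, Submodule.mkQ_apply,
        Submodule.Quotient.mk_eq_zero]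
      exact hprod y hy
  set N' : Submodule ℤ Sat := N.comap Sat.subtype with hN'
  have hcli : LinearIndependent ℤ c := bM.linearIndependent.comp f f.injective
  have hcard : Nat.card (Submodule.torsion ℤ ((Fin m → ℤ) ⧸ N)) = ∏ i, (a i).natAbs := by
    have hψ : Sat.map N.mkQ = LinearMap.range (N.mkQ.comp Sat.subtype) := by
      rw [LinearMap.range_comp, Submodule.range_subtype]
    have hker : LinearMap.ker (N.mkQ.comp Sat.subtype) = N' := by
      rw [LinearMap.ker_comp, Submodule.ker_mkQ]
    have e0 : (Submodule.torsion ℤ ((Fin m → ℤ) ⧸ N))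
        = LinearMap.range (N.mkQ.comp Sat.subtype) := by rw [htor, hψ]
    have e2 := (N.mkQ.comp Sat.subtype).quotKerEquivRange
    rw [hker] at e2
    rw [Nat.card_congr (LinearEquiv.ofEq _ _ e0).toEquiv,
      Nat.card_congr e2.toEquiv.symm]
    let bSat : Module.Basis (Fin r) ℤ Sat := Module.Basis.span hcli
    let eN : N' ≃ₗ[ℤ] N := Submodule.comapSubtypeEquivOfLe hNle
    let bN' : Module.Basis (Fin r) ℤ N' := bN.map eN.symm
    have hsnf' : ∀ i, ((bN' i : Sat) : Fin m → ℤ) = ((a i • bSat i : Sat) : Fin m → ℤ) := by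
      intro i
      have h1 : ((bN' i : Sat) : Fin m → ℤ) = (bN i : Fin m → ℤ) := by
        show (((eN.symm (bN i) : N') : Sat) : Fin m → ℤ) = (bN i : Fin m → ℤ)
        have h := Submodule.comapSubtypeEquivOfLe_apply_coe hNle (eN.symm (bN i))
        have h2 : eN (eN.symm (bN i)) = bN i := eN.apply_symm_apply _
        rw [show (Submodule.comapSubtypeEquivOfLe hNle) (eN.symm (bN i)) = bN i from h2] at h
        exact h.symm
      have h2 : ((a i • bSat i : Sat) : Fin m → ℤ) = a i • c i := by
        rw [Submodule.coe_smul]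
        congr 1
        exact congrArg Subtype.val (Module.Basis.span_apply hcli i)
      rw [h1, h2, hbNval i]
    let snf' : Module.Basis.SmithNormalForm N' (Fin r) r :=
      ⟨bSat, bN', Function.Embedding.refl _, a, fun i => Subtype.ext (hsnf' i)⟩
    have hidx2 := snf'.toAddSubgroup_index_eq_pow_mul_prod
    have hidx : Nat.card (Sat ⧸ N') = N'.toAddSubgroup.index := rfl
    rw [hidx, hidx2]
    simp [Fintype.card_fin, Int.index_zmultiples]
    rfl
  -- column selection over ℚ
  set qcol : Fin n → (Fin m → ℚ) := fun j => castL m (Mᵀ j) with hqcol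
  have hcolN : ∀ j, Mᵀ j ∈ N := by
    intro j
    rw [hNdef, Matrix.range_mulVecLin]
    exact subset_span ⟨j, rfl⟩
  obtain ⟨t, hts, htspan, htli⟩ := exists_linearIndependent ℚ (Set.range qcol)
  haveI : Fintype t := ((Set.finite_range qcol).subset hts).fintype
  set cq : Fin r → (Fin m → ℚ) := fun i => castL m (c i) with hcq
  have hcqli : LinearIndependent ℚ cq := by
    have h1 : LinearIndependent ℤ cq :=
      hcli.map' (castL m) (LinearMap.ker_eq_bot.mpr (castL_injective m))
    exact (LinearIndependent.iff_fractionRing ℤ ℚ).mp h1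
  have hNsub : ∀ x, x ∈ N → castL m x ∈ span ℚ (Set.range cq) := by
    intro x hx
    rw [← hNspan] at hx
    have h2 := castL_mem_span (S := Set.range (fun i => ((bN i : Fin m → ℤ)))) hx
    refine Submodule.span_le.mpr ?_ h2
    rintro _ ⟨_, ⟨i, rfl⟩, rfl⟩
    show castL m ((bN i : Fin m → ℤ)) ∈ span ℚ (Set.range cq)
    rw [hbNval i, LinearMap.map_smul, ← Int.cast_smul_eq_zsmul ℚ]
    exact Submodule.smul_mem _ _ (subset_span ⟨i, rfl⟩)
  have hspan_eq : span ℚ (Set.range qcol) = span ℚ (Set.range cq) := by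
    apply le_antisymm
    · rw [Submodule.span_le]
      rintro _ ⟨j, rfl⟩
      exact hNsub _ (hcolN j)
    · rw [Submodule.span_le]
      rintro _ ⟨i, rfl⟩
      show cq i ∈ span ℚ (Set.range qcol)
      have h1 : castL m ((bN i : Fin m → ℤ)) ∈ span ℚ (Set.range qcol) := by
        have h2 : (bN i : Fin m → ℤ) ∈ span ℤ (Set.range Mᵀ) := by
          rw [show Set.range Mᵀ = Set.range M.col from rfl, ← Matrix.range_mulVecLin, ← hNdef]; exact (bN i).2
        have h3 := castL_mem_span h2
        refine Submodule.span_le.mpr ?_ h3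
        rintro _ ⟨_, ⟨j, rfl⟩, rfl⟩
        exact subset_span ⟨j, rfl⟩
      have h3 : castL m ((bN i : Fin m → ℤ)) = (a i : ℚ) • cq i := by
        rw [hbNval i, LinearMap.map_smul, ← Int.cast_smul_eq_zsmul ℚ]
      have h4 : cq i = ((a i : ℚ))⁻¹ • castL m ((bN i : Fin m → ℤ)) := by
        rw [h3, inv_smul_smul₀ (by exact_mod_cast ha i)]
      rw [h4]
      exact Submodule.smul_mem _ _ h1
  have hfinrank : Module.finrank ℚ (span ℚ (Set.range qcol)) = r := by
    rw [hspan_eq, finrank_span_eq_card hcqli, Fintype.card_fin]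
  have hcardt : Fintype.card t = r := by
    have h5 := finrank_span_set_eq_card (s := t) htli
    rw [htspan, hfinrank] at h5
    rw [← Set.toFinset_card]
    exact h5.symm
  let e : Fin r ≃ t := (Fintype.equivFinOfCardEq hcardt).symm
  choose J hJspec using (fun x : t => hts x.2)
  have hJinj : Function.Injective J := by
    intro x y hxy
    apply Subtype.ext
    rw [← hJspec x, ← hJspec y, hxy]
  have hrn : r ≤ n := by
    have := Fintype.card_le_of_injective (J ∘ e) (hJinj.comp e.injective)
    simpa using this
  have hrm : r ≤ m := by simpa using Fintype.card_le_of_embedding f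
  set v : Fin r → (Fin m → ℤ) := fun k => Mᵀ (J (e k)) with hv
  have hvN : ∀ k, v k ∈ N := fun k => hcolN _
  have hvq : ∀ k, castL m (v k) = ((e k : t) : Fin m → ℚ) := fun k => hJspec (e k)
  have hvli : LinearIndependent ℚ (fun k => castL m (v k)) := by
    have h := htli.comp e e.injective
    rw [show (fun k => castL m (v k)) = (fun k => ((e k : t) : Fin m → ℚ)) from funext hvq]
    exact h
  -- row selection
  set A : Matrix (Fin r) (Fin m) ℚ := Matrix.of (fun k i => ((v k i : ℤ) : ℚ)) with hA
  have hAtop : span ℚ (Set.range Aᵀ) = ⊤ := by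
    rw [show Set.range Aᵀ = Set.range A.col from rfl, ← Matrix.range_mulVecLin]
    apply Submodule.eq_top_of_finrank_eq
    have hr1 : Module.finrank ℚ (LinearMap.range A.mulVecLin) = A.rank := rfl
    have hr2 : A.rank = r := by
      rw [← Matrix.rank_transpose, Matrix.rank, Matrix.range_mulVecLin]
      change Module.finrank ℚ (span ℚ (Set.range A)) = r
      have : (Set.range A) = Set.range (fun k => castL m (v k)) := by
        congr 1
      rw [this, finrank_span_eq_card hvli, Fintype.card_fin]
    rw [hr1, hr2, Module.finrank_pi, Fintype.card_fin]
  obtain ⟨t', ht's, ht'span, ht'li⟩ := exists_linearIndependent ℚ (Set.range Aᵀ)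
  haveI : Fintype t' := ((Set.finite_range Aᵀ).subset ht's).fintype
  have hcardt' : Fintype.card t' = r := by
    have h5 := finrank_span_set_eq_card (s := t') ht'li
    rw [ht'span, hAtop, finrank_top, Module.finrank_pi, Fintype.card_fin] at h5
    rw [← Set.toFinset_card]
    exact h5.symm
  let e' : Fin r ≃ t' := (Fintype.equivFinOfCardEq hcardt').symm
  choose G hGspec using (fun x : t' => ht's x.2)
  set g : Fin r → Fin m := fun k => G (e' k) with hg
  set D : Matrix (Fin r) (Fin r) ℤ := Matrix.of (fun i' k => v k (g i')) with hD
  have hrowD : ∀ i', (D.map (Int.cast : ℤ → ℚ)) i' = ((e' i' : t') : Fin r → ℚ) := by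
    intro i'
    have h6 := hGspec (e' i')
    ext k
    have h7 := congrFun h6 k
    simpa [hD, Matrix.map_apply, hA, Matrix.transpose_apply] using h7
  have hdetq : (D.map (Int.cast : ℤ → ℚ)).det ≠ 0 := by
    intro h0
    obtain ⟨w, hw0, hwD⟩ := Matrix.exists_vecMul_eq_zero_iff.mpr h0
    have hrows := ht'li.comp e' e'.injective
    rw [Fintype.linearIndependent_iff] at hrows
    have hsum : ∑ i', w i' • ((e' i' : t') : Fin r → ℚ) = 0 := by
      ext k
      have h6 := congrFun hwD k
      simp only [Matrix.vecMul, dotProduct, Pi.zero_apply] at h6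
      simp only [Finset.sum_apply, Pi.smul_apply, smul_eq_mul, Pi.zero_apply, ← hrowD]
      exact h6
    exact hw0 (funext fun i' => hrows w hsum i')
  have hdet : D.det ≠ 0 := by
    intro h0
    apply hdetq
    rw [show D.map (Int.cast : ℤ → ℚ) = (Int.castRingHom ℚ).mapMatrix D from rfl,
      ← RingHom.map_det, h0]
    simp
  -- divisibility
  set z : Fin r → Fin r → ℤ := fun i k => bN.repr ⟨v k, hvN k⟩ i with hzdef
  have hvrepr : ∀ k, v k = ∑ i, (a i * z i k) • c i := by
    intro k
    have h7 : ∑ i, (bN.repr ⟨v k, hvN k⟩ i) • (bN i : Fin m → ℤ) = v k := by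
      have h8 := congrArg (N.subtype) (bN.sum_repr ⟨v k, hvN k⟩)
      rw [map_sum] at h8
      simpa only [Submodule.subtype_apply, _root_.map_smul, SetLike.val_smul] using h8
    rw [← h7]
    congr 1
    ext i
    rw [hbNval i, smul_smul, mul_comm (bN.repr ⟨v k, hvN k⟩ i) (a i)]
  have hDfact : D = (Matrix.of fun i' i => c i (g i')) *
      (Matrix.diagonal a * Matrix.of fun i k => z i k) := by
    ext i' k
    rw [Matrix.mul_apply]
    have h9 := congrFun (hvrepr k) (g i')
    simp only [Finset.sum_apply, Pi.smul_apply, smul_eq_mul] at h9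
    rw [show D i' k = v k (g i') from rfl, h9]
    refine Finset.sum_congr rfl fun i _ => ?_
    rw [Matrix.mul_apply]
    simp [Matrix.diagonal_apply, Finset.sum_ite_eq, Matrix.of_apply]
    ring
  have hdvd : (∏ i, a i) ∣ D.det := by
    rw [hDfact, Matrix.det_mul, Matrix.det_mul, Matrix.det_diagonal]
    exact ⟨(Matrix.of fun i' i => c i (g i')).det * (Matrix.of fun i k => z i k).det,
      by ring⟩
  have hDabs : ∀ i' k, |D i' k| ≤ 1 := by
    intro i' k
    have h10 : D i' k = M (g i') (J (e k)) := rfl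
    rcases hM (g i') (J (e k)) with h | h | h <;> rw [h10] <;> rw [h] <;> norm_num
  have hbound : D.det.natAbs ≤ r.factorial := detNatAbs_le_factorial D hDabs
  have hprodle : (∏ i, (a i).natAbs) ≤ r.factorial := by
    have h9 : (∏ i, a i).natAbs ∣ D.det.natAbs := Int.natAbs_dvd_natAbs.mpr hdvd
    have h10 : (∏ i, a i).natAbs = ∏ i, (a i).natAbs := map_prod Int.natAbsHom a Finset.univ
    have hDne : D.det.natAbs ≠ 0 := fun h => hdet (Int.natAbs_eq_zero.mp h)
    calc ∏ i, (a i).natAbs = (∏ i, a i).natAbs := h10.symm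
      _ ≤ D.det.natAbs := Nat.le_of_dvd (Nat.pos_of_ne_zero hDne) h9
      _ ≤ r.factorial := hbound
  rw [hcard]
  exact le_min (hprodle.trans (Nat.factorial_le hrm)) (hprodle.trans (Nat.factorial_le hrn))
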